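/- Let (C, ∂) be a finite-dimensional filtered chain complex over ℤ/2 as above, and suppose C = C_U ⊕ C_{U^c} is a direct sum of subspaces spanned by subsets of the basis, with ∂ ∘ π_U = π_U ∘ ∂ ∘ π_U (i.e. no differential from C_{U^c} into C_U). If a cycle a representing a class α satisfies a ∈ C_U, and every basis element in C_{U^c} has action in (−δ, δ), then for any class α represented by a cycle in C_U of action level λ, one has c(α) ≤ λ; moreover if c(α) < −δ then every minimal-action representative of α lies in C_U. -/
import Mathlib


/-- The set of action levels at which the class of the cycle `z` is
representable; its infimum is the spectral invariant `c([z])`. -/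
def specSet {ι : Type*} (A : ι → ℝ)
    (d : (ι →₀ ZMod 2) →ₗ[ZMod 2] (ι →₀ ZMod 2)) (z : ι →₀ ZMod 2) : Set ℝ :=
  {a : ℝ | ∃ z' : ι →₀ ZMod 2,
    d z' = 0 ∧ (∀ i ∈ z'.support, A i ≤ a) ∧ ∃ p, z' - z = d p}

/-- For a finite filtered `ℤ/2` chain complex with a basis decomposition
`C = C_U ⊕ C_{U^c}` such that `∂ ∘ π_U = π_U ∘ ∂ ∘ π_U` (the differential of a
chain supported in `U` stays supported in `U`) and every basis element outside
`U` has action in `(−δ, δ)`: if a nonzero class `α = [z]` is represented by a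
cycle `z` lying in `C_U` of action level `≤ λ`, then `c(α) ≤ λ`; moreover, if
`c(α) < −δ` then every minimal-action representative of `α` lies in `C_U`. -/
theorem stmt3 {ι : Type*} [Fintype ι] (A : ι → ℝ) (δ : ℝ)
    (d : (ι →₀ ZMod 2) →ₗ[ZMod 2] (ι →₀ ZMod 2))
    (hsq : ∀ c, d (d c) = 0)
    (hfilt : ∀ (c : ι →₀ ZMod 2) (a : ℝ),
      (∀ i ∈ c.support, A i ≤ a) → ∀ i ∈ (d c).support, A i ≤ a)
    (SU : Set ι)
    -- barricade: the differential of a chain supported in `U` is supported in `U`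
    (hbar : ∀ c : ι →₀ ZMod 2, (c.support : Set ι) ⊆ SU → ((d c).support : Set ι) ⊆ SU)
    -- basis elements outside `U` have action in `(−δ, δ)`
    (hout : ∀ i : ι, i ∉ SU → A i ∈ Set.Ioo (-δ) δ)
    (z : ι →₀ ZMod 2) (hz : d z = 0)
    -- the class `α = [z]` is nonzero
    (hα : ∀ p, d p ≠ z)
    (hzU : (z.support : Set ι) ⊆ SU)
    (lam : ℝ) (hlam : ∀ i ∈ z.support, A i ≤ lam) :
    sInf (specSet A d z) ≤ lam ∧
    (sInf (specSet A d z) < -δ →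
      ∀ z' : ι →₀ ZMod 2, d z' = 0 → (∃ p, z' - z = d p) →
        (∀ i ∈ z'.support, A i ≤ sInf (specSet A d z)) →
          (z'.support : Set ι) ⊆ SU) := by
  have hz0 : z ≠ 0 := by
    intro h; exact hα 0 (by simp [h])
  obtain ⟨i0, hi0⟩ := Finsupp.support_nonempty_iff.mpr hz0
  have hbdd : BddBelow (specSet A d z) := by
    refine ⟨Finset.univ.inf' ⟨i0, Finset.mem_univ i0⟩ A, ?_⟩
    rintro a ⟨z', hdz', hA, p, hp⟩
    have hz'0 : z' ≠ 0 := by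
      intro h
      apply hα (-p)
      have hzp : -z = d p := by simpa [h] using hp
      rw [map_neg, ← hzp, neg_neg]
    obtain ⟨j, hj⟩ := Finsupp.support_nonempty_iff.mpr hz'0
    exact le_trans (Finset.inf'_le A (Finset.mem_univ j)) (hA j hj)
  constructor
  · exact csInf_le hbdd ⟨z, hz, hlam, 0, by simp⟩
  · intro hinf z' _ _ hA i hi
    by_contra hiU
    have h1 := (hout i hiU).1
    have h2 := hA i (Finset.mem_coe.mp hi)
    linarith
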